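/- arXiv:2501.07691 — 2 statements merged into one kernel-verified Lean document; each statement's English description precedes it below -/
import Mathlib

section
/- Let Γ be a group acting ℚ-linearly on a ℚ-vector space V, and form the semidirect product V ⋊ Γ of the additive group of V by Γ. Give V the structure of a (V ⋊ Γ)-module in which the subgroup V acts trivially and Γ acts by its given linear action. Then the sequence 0 → H¹(Γ, V) → H¹(V ⋊ Γ, V) → End_Γ(V) → 0 is exact, where the first map is inflation along the projection V ⋊ Γ → Γ, the second is induced by restriction of 1-cocycles to the subgroup V, and End_Γ(V) denotes the ℚ-linear Γ-equivariant endomorphisms of V (every additive Γ-equivariant map V → V between ℚ-vector spaces being automatically ℚ-linear). -/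
/-- The action of `Γ` on `Multiplicative V` by group automorphisms induced by a
`ℚ`-linear action `ρ : Γ →* (V ≃ₗ[ℚ] V)`; it is used to form the semidirect product
`V ⋊ Γ` (written multiplicatively as `Multiplicative V ⋊ Γ`). -/
def mulAutOfLinear {Γ V : Type*} [Group Γ] [AddCommGroup V] [Module ℚ V]
    (ρ : Γ →* (V ≃ₗ[ℚ] V)) : Γ →* MulAut (Multiplicative V) where
  toFun γ := AddEquiv.toMultiplicative (ρ γ).toAddEquiv
  map_one' := by
    ext x
    simp [AddEquiv.toMultiplicative, LinearEquiv.coe_toAddEquiv]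
  map_mul' γ γ' := by
    ext x
    simp [AddEquiv.toMultiplicative, LinearEquiv.coe_toAddEquiv]

/-- Let `Γ` act `ℚ`-linearly on a `ℚ`-vector space `V`, and form the
semidirect product `V ⋊ Γ`.  Giving `V` the `(V ⋊ Γ)`-module structure in which the
subgroup `V` acts trivially and `Γ` acts by its given linear action (so `(x, γ)` acts as
`ρ γ`), the sequence `0 → H¹(Γ, V) → H¹(V ⋊ Γ, V) → End_Γ(V) → 0` is exact, where the
first map is inflation along `V ⋊ Γ → Γ`, the second is induced by restriction of
1-cocycles to the subgroup `V`, and `End_Γ(V)` is the `ℚ`-linear `Γ`-equivariant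
endomorphisms of `V`.  Stated at the level of cocycles:
(1) inflation of a `Γ`-cocycle is a `(V ⋊ Γ)`-cocycle;
(2) a `Γ`-cocycle whose inflation is a coboundary is a coboundary (injectivity);
(3) the restriction of a `(V ⋊ Γ)`-cocycle to `V` is a `ℚ`-linear `Γ`-equivariant
    endomorphism of `V`;
(4) a `(V ⋊ Γ)`-cocycle restricts to `0` on `V` iff it is cohomologous to an inflated
    `Γ`-cocycle (exactness at the middle);
(5) every `ℚ`-linear `Γ`-equivariant endomorphism of `V` is the restriction of some
    `(V ⋊ Γ)`-cocycle (surjectivity). -/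
theorem stmt_8 {Γ V : Type*} [Group Γ] [AddCommGroup V] [Module ℚ V]
    (ρ : Γ →* (V ≃ₗ[ℚ] V)) :
    -- (1) inflation sends cocycles to cocycles
    (∀ c : Γ → V, (∀ γ γ' : Γ, c (γ * γ') = c γ + ρ γ (c γ')) →
      ∀ g h : Multiplicative V ⋊[mulAutOfLinear ρ] Γ,
        c (g * h).right = c g.right + ρ g.right (c h.right)) ∧
    -- (2) injectivity of the inflation map on H¹
    (∀ c : Γ → V, (∀ γ γ' : Γ, c (γ * γ') = c γ + ρ γ (c γ')) →
      (∃ m : V, ∀ g : Multiplicative V ⋊[mulAutOfLinear ρ] Γ,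
        c g.right = ρ g.right m - m) →
      ∃ m : V, ∀ γ : Γ, c γ = ρ γ m - m) ∧
    -- (3) restriction of a cocycle to V is a ℚ-linear Γ-equivariant endomorphism
    (∀ c : Multiplicative V ⋊[mulAutOfLinear ρ] Γ → V,
      (∀ g h, c (g * h) = c g + ρ g.right (c h)) →
      ∃ f : V →ₗ[ℚ] V, (∀ γ : Γ, ∀ x : V, f (ρ γ x) = ρ γ (f x)) ∧
        ∀ x : V, f x = c (SemidirectProduct.inl (Multiplicative.ofAdd x))) ∧
    -- (4) exactness at the middle
    (∀ c : Multiplicative V ⋊[mulAutOfLinear ρ] Γ → V,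
      (∀ g h, c (g * h) = c g + ρ g.right (c h)) →
      ((∀ x : V, c (SemidirectProduct.inl (Multiplicative.ofAdd x)) = 0) ↔
        ∃ c' : Γ → V, (∀ γ γ' : Γ, c' (γ * γ') = c' γ + ρ γ (c' γ')) ∧
          ∃ m : V, ∀ g : Multiplicative V ⋊[mulAutOfLinear ρ] Γ,
            c g = c' g.right + (ρ g.right m - m))) ∧
    -- (5) surjectivity onto End_Γ(V)
    (∀ f : V →ₗ[ℚ] V, (∀ γ : Γ, ∀ x : V, f (ρ γ x) = ρ γ (f x)) →
      ∃ c : Multiplicative V ⋊[mulAutOfLinear ρ] Γ → V,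
        (∀ g h, c (g * h) = c g + ρ g.right (c h)) ∧
        ∀ x : V, c (SemidirectProduct.inl (Multiplicative.ofAdd x)) = f x) := by
    classical
  -- auxiliary facts
  have key : ∀ (γ : Γ) (y : Multiplicative V),
      Multiplicative.toAdd ((mulAutOfLinear ρ γ) y) = ρ γ (Multiplicative.toAdd y) := by
    intro γ y; rfl
  refine ⟨?_, ?_, ?_, ?_, ?_⟩
  · intro c hc g h
    exact hc g.right h.right
  · rintro c hc ⟨m, hm⟩
    exact ⟨m, fun γ => hm (SemidirectProduct.inr γ)⟩
  · intro c hc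
    have h0 : c 1 = 0 := by
      have h1 := hc 1 1
      simp at h1
      exact h1
    have hadd : ∀ x y : V, c (SemidirectProduct.inl (Multiplicative.ofAdd (x + y))) =
        c (SemidirectProduct.inl (Multiplicative.ofAdd x)) +
          c (SemidirectProduct.inl (Multiplicative.ofAdd y)) := by
      intro x y
      have h1 := hc (SemidirectProduct.inl (Multiplicative.ofAdd x))
        (SemidirectProduct.inl (Multiplicative.ofAdd y))
      simp only [← map_mul, SemidirectProduct.right_inl, map_one] at h1
      simpa using h1
    have hequiv : ∀ (γ : Γ) (x : V),
        c (SemidirectProduct.inl (Multiplicative.ofAdd (ρ γ x))) =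
          ρ γ (c (SemidirectProduct.inl (Multiplicative.ofAdd x))) := by
      intro γ x
      have hcomm : SemidirectProduct.inr γ *
          SemidirectProduct.inl (Multiplicative.ofAdd x) =
          SemidirectProduct.inl (Multiplicative.ofAdd (ρ γ x)) *
            (SemidirectProduct.inr γ : Multiplicative V ⋊[mulAutOfLinear ρ] Γ) := by
        set_option linter.unnecessarySeqFocus false in ext <;> simp <;> rfl
      have h1 := hc (SemidirectProduct.inr γ) (SemidirectProduct.inl (Multiplicative.ofAdd x))
      have h2 := hc (SemidirectProduct.inl (Multiplicative.ofAdd (ρ γ x)))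
        (SemidirectProduct.inr γ)
      rw [hcomm] at h1
      rw [h2] at h1
      simp only [SemidirectProduct.right_inr, SemidirectProduct.right_inl, map_one] at h1
      have h1' : c (SemidirectProduct.inl (Multiplicative.ofAdd (ρ γ x))) +
          c (SemidirectProduct.inr γ) =
          c (SemidirectProduct.inr γ) +
            ρ γ (c (SemidirectProduct.inl (Multiplicative.ofAdd x))) := by
        simpa using h1
      rw [add_comm (c (SemidirectProduct.inr γ))] at h1'
      exact add_right_cancel h1'
    refine ⟨(AddMonoidHom.mk'
      (fun x => c (SemidirectProduct.inl (Multiplicative.ofAdd x))) hadd).toRatLinearMap, ?_, ?_⟩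
    · intro γ x; exact hequiv γ x
    · intro x; rfl
  · intro c hc
    have h0 : c 1 = 0 := by
      have h1 := hc 1 1
      simp at h1
      exact h1
    constructor
    · intro hv
      refine ⟨fun γ => c (SemidirectProduct.inr γ), ?_, 0, ?_⟩
      · intro γ γ'
        have := hc (SemidirectProduct.inr γ) (SemidirectProduct.inr γ')
        simpa using this
      · intro g
        have hdecomp : (SemidirectProduct.inl g.left) * (SemidirectProduct.inr g.right) = g :=
          SemidirectProduct.inl_left_mul_inr_right g
        have h1 := hc (SemidirectProduct.inl g.left) (SemidirectProduct.inr g.right)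
        rw [hdecomp] at h1
        have h2 : c (SemidirectProduct.inl g.left) = 0 := by
          simpa using hv (Multiplicative.toAdd g.left)
        simp [h1, h2]
    · rintro ⟨c', hc', m, hm⟩ x
      have h0' : c' 1 = 0 := by
        have h1 := hc' 1 1
        simpa using h1
      have := hm (SemidirectProduct.inl (Multiplicative.ofAdd x))
      simpa [h0'] using this
  · intro f hf
    refine ⟨fun g => f (Multiplicative.toAdd g.left), ?_, ?_⟩
    · intro g h
      show f (Multiplicative.toAdd (g * h).left) = _
      have hl : Multiplicative.toAdd (g * h).left =
          Multiplicative.toAdd g.left + ρ g.right (Multiplicative.toAdd h.left) := by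
        rw [SemidirectProduct.mul_left]
        rw [toAdd_mul, key]
      rw [hl, map_add, hf]
    · intro x; simp
end

section
/- Let Γ₁ and Γ₂ be groups and V a finite-dimensional representation of Γ₁ × Γ₂ over a field k which is semisimple as a representation of Γ₁ (by restriction). Each γ₁ ∈ Γ₁ acts on V by a Γ₂-equivariant automorphism, hence induces an action of Γ₁ on H¹(Γ₂, V). Then the natural map H¹(Γ₂, V^{Γ₁}) → H¹(Γ₂, V)^{Γ₁}, induced by the inclusion of the Γ₂-submodule V^{Γ₁} into V, is an isomorphism. -/
open Submodule LinearMap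

/-- Key lemma: if `V` is a finite-dimensional semisimple representation of `G`,
`W'` a stable subspace with no nonzero fixed vectors, and `p` a linear map with
range inside `W'`, then `p` lies in the span of the maps `σ g ∘ p - p`. -/
lemma key_lemma {k : Type*} [Field k] {V : Type*} [AddCommGroup V] [Module k V]
    [FiniteDimensional k V] {G : Type*} [Group G] (σ : Representation k G V)
    (hss : ∀ W : Submodule k V, (∀ g : G, ∀ w ∈ W, σ g w ∈ W) →
      ∃ W' : Submodule k V, (∀ g : G, ∀ w ∈ W', σ g w ∈ W') ∧ IsCompl W W')
    (W' : Submodule k V) (hW' : ∀ g : G, ∀ w ∈ W', σ g w ∈ W')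
    (htriv : ∀ v ∈ W', (∀ g : G, σ g v = v) → v = 0)
    (p : V →ₗ[k] V) (hrange : ∀ v, p v ∈ W') :
    p ∈ Submodule.span k {f : V →ₗ[k] V | ∃ g : G, f = σ g ∘ₗ p - p} := by
  classical
  set R := MonoidAlgebra k G with hR
  letI mV : Module R V := Module.compHom V σ.asAlgebraHom.toRingHom
  have hsmul : ∀ (r : R) (v : V), r • v = σ.asAlgebraHom r v := fun _ _ => rfl
  letI : SMulCommClass k R V :=
    ⟨fun c r v => by simp only [hsmul, map_smul]⟩
  letI : IsScalarTower k R V :=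
    ⟨fun c r v => by simp only [smul_eq_mul, hsmul, map_smul, LinearMap.smul_apply]⟩
  -- semisimplicity of V as an R-module
  haveI ssV : IsSemisimpleModule R V := by
    refine { toComplementedLattice := ⟨?_⟩ }
    intro N
    have hstab : ∀ g : G, ∀ w ∈ N.restrictScalars k, σ g w ∈ N.restrictScalars k := by
      intro g w hw
      have : σ g w = (MonoidAlgebra.single g (1:k) : R) • w := by
        rw [hsmul, Representation.asAlgebraHom_single, one_smul]
      rw [Submodule.restrictScalars_mem] at hw ⊢
      rw [this]
      exact N.smul_mem _ hw
    obtain ⟨C, hC, hcompl⟩ := hss (N.restrictScalars k) hstab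
    refine ⟨{ carrier := C
              add_mem' := fun ha hb => C.add_mem ha hb
              zero_mem' := C.zero_mem
              smul_mem' := ?_ }, ?_, ?_⟩
    · intro r w hw
      show σ.asAlgebraHom r w ∈ C
      induction r using MonoidAlgebra.induction_linear with
      | zero => simpa using C.zero_mem
      | add f g hf hg => rw [map_add, LinearMap.add_apply]; exact C.add_mem hf hg
      | single g c =>
          rw [Representation.asAlgebraHom_single, LinearMap.smul_apply]
          exact C.smul_mem _ (hC g w hw)
    · rw [disjoint_iff_inf_le]
      intro x hx
      have : x ∈ (N.restrictScalars k) ⊓ C := ⟨hx.1, hx.2⟩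
      rw [hcompl.inf_eq_bot] at this
      exact this
    · rw [codisjoint_iff, eq_top_iff]
      intro x _
      have : x ∈ (N.restrictScalars k) ⊔ C := by rw [hcompl.sup_eq_top]; trivial
      obtain ⟨y, hy, z, hz, rfl⟩ := Submodule.mem_sup.mp this
      exact Submodule.add_mem _ (Submodule.mem_sup_left hy) (Submodule.mem_sup_right hz)
  -- semisimplicity of V →ₗ[k] V as an R-module (acting by postcomposition)
  letI mH : Module R (V →ₗ[k] V) := LinearMap.module
  have hsmulH : ∀ (r : R) (f : V →ₗ[k] V), r • f = (σ.asAlgebraHom r : V →ₗ[k] V) ∘ₗ f :=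
    fun _ _ => rfl
  let n := Module.finrank k V
  let b : Module.Basis (Fin n) k V := Module.finBasis k V
  let e : (Fin n → V) ≃ₗ[R] (V →ₗ[k] V) := b.constr R
  haveI ssPi : IsSemisimpleModule R (Fin n → V) :=
    isSemisimpleModule_of_isSemisimpleModule_submodule'
      (fun i => IsSemisimpleModule.range (LinearMap.single R (fun _ : Fin n => V) i))
      (LinearMap.iSup_range_single R _)
  haveI ssH : IsSemisimpleModule R (V →ₗ[k] V) := IsSemisimpleModule.congr e.symm
  -- the "augmentation ideal" J and the "algebra" A as k-spans
  set Jk : Submodule k (V →ₗ[k] V) :=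
    Submodule.span k {f : V →ₗ[k] V | ∃ g : G, f = σ g ∘ₗ p - p} with hJk
  set Ak : Submodule k (V →ₗ[k] V) :=
    Submodule.span k {f : V →ₗ[k] V | ∃ g : G, f = σ g ∘ₗ p} with hAk
  have hJg : ∀ g : G, ∀ f ∈ Jk, (σ g : V →ₗ[k] V) ∘ₗ f ∈ Jk := by
    intro g f hf
    induction hf using Submodule.span_induction with
    | mem f hf =>
        obtain ⟨h, rfl⟩ := hf
        have : (σ g : V →ₗ[k] V) ∘ₗ ((σ h : V →ₗ[k] V) ∘ₗ p - p)
            = ((σ (g*h) : V →ₗ[k] V) ∘ₗ p - p) - ((σ g : V →ₗ[k] V) ∘ₗ p - p) := by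
          ext v; simp [map_mul, Module.End.mul_apply]
        rw [this]
        exact Submodule.sub_mem _ (Submodule.subset_span ⟨g*h, rfl⟩)
          (Submodule.subset_span ⟨g, rfl⟩)
    | zero => simpa using Jk.zero_mem
    | add f₁ f₂ _ _ h₁ h₂ => rw [comp_add]; exact Jk.add_mem h₁ h₂
    | smul c f _ h => rw [comp_smul]; exact Jk.smul_mem _ h
  have hAg : ∀ g : G, ∀ f ∈ Ak, (σ g : V →ₗ[k] V) ∘ₗ f ∈ Ak := by
    intro g f hf
    induction hf using Submodule.span_induction with
    | mem f hf =>
        obtain ⟨h, rfl⟩ := hf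
        have : (σ g : V →ₗ[k] V) ∘ₗ ((σ h : V →ₗ[k] V) ∘ₗ p)
            = (σ (g*h) : V →ₗ[k] V) ∘ₗ p := by
          ext v; simp [map_mul, Module.End.mul_apply]
        rw [this]
        exact Submodule.subset_span ⟨g*h, rfl⟩
    | zero => simpa using Ak.zero_mem
    | add f₁ f₂ _ _ h₁ h₂ => rw [comp_add]; exact Ak.add_mem h₁ h₂
    | smul c f _ h => rw [comp_smul]; exact Ak.smul_mem _ h
  have hRstab : ∀ (T : Submodule k (V →ₗ[k] V)),
      (∀ g : G, ∀ f ∈ T, (σ g : V →ₗ[k] V) ∘ₗ f ∈ T) →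
      ∀ (r : R), ∀ f ∈ T, r • f ∈ T := by
    intro T hT r f hf
    rw [hsmulH]
    induction r using MonoidAlgebra.induction_linear with
    | zero => simpa using T.zero_mem
    | add r₁ r₂ h₁ h₂ => rw [map_add, add_comp]; exact T.add_mem h₁ h₂
    | single g c =>
        rw [Representation.asAlgebraHom_single, smul_comp]
        exact T.smul_mem _ (hT g f hf)
  let J_R : Submodule R (V →ₗ[k] V) :=
    { carrier := Jk
      add_mem' := fun ha hb => Jk.add_mem ha hb
      zero_mem' := Jk.zero_mem
      smul_mem' := fun r f hf => hRstab Jk hJg r f hf }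
  let A_R : Submodule R (V →ₗ[k] V) :=
    { carrier := Ak
      add_mem' := fun ha hb => Ak.add_mem ha hb
      zero_mem' := Ak.zero_mem
      smul_mem' := fun r f hf => hRstab Ak hAg r f hf }
  have hJA : J_R ≤ A_R := by
    intro f hf
    show f ∈ Ak
    have : Jk ≤ Ak := by
      rw [hJk]
      refine Submodule.span_le.mpr ?_
      rintro f ⟨g, rfl⟩
      have hp1 : p = (σ (1:G) : V →ₗ[k] V) ∘ₗ p := by
        ext v; simp
      refine Submodule.sub_mem _ (Submodule.subset_span ⟨g, rfl⟩) ?_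
      rw [hp1]
      exact Submodule.subset_span ⟨1, rfl⟩
    exact this hf
  have hpA : p ∈ A_R := by
    show p ∈ Ak
    have hp1 : p = (σ (1:G) : V →ₗ[k] V) ∘ₗ p := by ext v; simp
    rw [hp1]
    exact Submodule.subset_span ⟨1, rfl⟩
  obtain ⟨C, hC⟩ := exists_isCompl J_R
  have hmod : A_R = J_R ⊔ (C ⊓ A_R) := by
    have := sup_inf_assoc_of_le (α := Submodule R (V →ₗ[k] V)) C hJA
    rw [hC.sup_eq_top, top_inf_eq] at this
    exact this
  have hpJL : p ∈ J_R ⊔ (C ⊓ A_R) := hmod ▸ hpA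
  obtain ⟨j, hj, x, hx, hjx⟩ := Submodule.mem_sup.mp hpJL
  -- facts about elements of Ak
  have hAsub : ∀ f ∈ Ak, ∀ g : G, (σ g : V →ₗ[k] V) ∘ₗ f - f ∈ Jk := by
    intro f hf
    induction hf using Submodule.span_induction with
    | mem f hf =>
        obtain ⟨h, rfl⟩ := hf
        intro g
        have : (σ g : V →ₗ[k] V) ∘ₗ ((σ h : V →ₗ[k] V) ∘ₗ p) - (σ h : V →ₗ[k] V) ∘ₗ p
            = ((σ (g*h) : V →ₗ[k] V) ∘ₗ p - p) - ((σ h : V →ₗ[k] V) ∘ₗ p - p) := by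
          ext v; simp [map_mul, Module.End.mul_apply]
        rw [this]
        exact Submodule.sub_mem _ (Submodule.subset_span ⟨g*h, rfl⟩)
          (Submodule.subset_span ⟨h, rfl⟩)
    | zero => intro g; simpa using Jk.zero_mem
    | add f₁ f₂ _ _ h₁ h₂ =>
        intro g
        have : (σ g : V →ₗ[k] V) ∘ₗ (f₁ + f₂) - (f₁ + f₂)
            = ((σ g : V →ₗ[k] V) ∘ₗ f₁ - f₁) + ((σ g : V →ₗ[k] V) ∘ₗ f₂ - f₂) := by
          rw [comp_add]; abel
        rw [this]; exact Jk.add_mem (h₁ g) (h₂ g)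
    | smul c f _ h =>
        intro g
        have : (σ g : V →ₗ[k] V) ∘ₗ (c • f) - c • f
            = c • ((σ g : V →ₗ[k] V) ∘ₗ f - f) := by
          rw [comp_smul, smul_sub]
        rw [this]; exact Jk.smul_mem _ (h g)
  have hAW' : ∀ f ∈ Ak, ∀ v, f v ∈ W' := by
    intro f hf
    induction hf using Submodule.span_induction with
    | mem f hf =>
        obtain ⟨g, rfl⟩ := hf
        intro v
        exact hW' g _ (hrange v)
    | zero => intro v; simpa using W'.zero_mem
    | add f₁ f₂ _ _ h₁ h₂ => intro v; exact W'.add_mem (h₁ v) (h₂ v)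
    | smul c f _ h => intro v; exact W'.smul_mem _ (h v)
  -- x is G-invariant, hence zero
  have hxA : x ∈ Ak := hx.2
  have hxfix : ∀ g : G, (σ g : V →ₗ[k] V) ∘ₗ x = x := by
    intro g
    have h1 : (σ g : V →ₗ[k] V) ∘ₗ x - x ∈ Jk := hAsub x hxA g
    have h2 : (σ g : V →ₗ[k] V) ∘ₗ x ∈ C ⊓ A_R := by
      have : (σ g : V →ₗ[k] V) ∘ₗ x = (MonoidAlgebra.single g (1:k) : R) • x := by
        rw [hsmulH, Representation.asAlgebraHom_single, one_smul]
      rw [this]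
      exact Submodule.smul_mem _ _ hx
    have h3 : (σ g : V →ₗ[k] V) ∘ₗ x - x ∈ C ⊓ A_R :=
      Submodule.sub_mem _ h2 hx
    have h4 : (σ g : V →ₗ[k] V) ∘ₗ x - x ∈ J_R ⊓ C := ⟨h1, h3.1⟩
    rw [hC.inf_eq_bot] at h4
    rw [Submodule.mem_bot] at h4
    exact sub_eq_zero.mp h4
  have hx0 : x = 0 := by
    ext v
    have hv1 : x v ∈ W' := hAW' x hxA v
    have hv2 : ∀ g : G, σ g (x v) = x v := by
      intro g
      have := congrArg (fun f : V →ₗ[k] V => f v) (hxfix g)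
      simpa using this
    simpa using htriv _ hv1 hv2
  rw [hx0, add_zero] at hjx
  rw [← hjx]
  exact hj


/-- Let `Γ₁`, `Γ₂` be groups and `V` a finite-dimensional representation
of `Γ₁ × Γ₂` over a field `k`, semisimple as a representation of `Γ₁`.  Each `γ₁ ∈ Γ₁`
acts on `V` by a `Γ₂`-equivariant automorphism, hence `Γ₁` acts on `H¹(Γ₂, V)` (on
cocycles, by `(γ₁ · c) γ₂ = ρ (γ₁, 1) (c γ₂)`).  Then the natural map
`H¹(Γ₂, V^{Γ₁}) → H¹(Γ₂, V)^{Γ₁}` induced by the inclusion `V^{Γ₁} ⊆ V` is an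
isomorphism.  Stated at the level of cocycles:
(injectivity) a `Γ₂`-cocycle with values in `V^{Γ₁}` which is a coboundary of an element
of `V` is a coboundary of an element of `V^{Γ₁}`;
(surjectivity) a `Γ₂`-cocycle `c` with values in `V` whose class is `Γ₁`-invariant (i.e.
for every `γ₁`, the cocycle `γ₂ ↦ ρ (γ₁,1) (c γ₂) - c γ₂` is a coboundary) is
cohomologous to a `Γ₂`-cocycle with values in `V^{Γ₁}`. -/
theorem stmt_10 {Γ₁ Γ₂ : Type*} [Group Γ₁] [Group Γ₂] {k V : Type*} [Field k]
    [AddCommGroup V] [Module k V] [FiniteDimensional k V]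
    (ρ : Representation k (Γ₁ × Γ₂) V)
    (hss : ∀ W : Submodule k V, (∀ γ₁ : Γ₁, ∀ w ∈ W, ρ (γ₁, 1) w ∈ W) →
      ∃ W' : Submodule k V, (∀ γ₁ : Γ₁, ∀ w ∈ W', ρ (γ₁, 1) w ∈ W') ∧ IsCompl W W') :
    -- injectivity of H¹(Γ₂, V^{Γ₁}) → H¹(Γ₂, V)^{Γ₁}
    (∀ c : Γ₂ → V,
      (∀ γ γ' : Γ₂, c (γ * γ') = c γ + ρ (1, γ) (c γ')) →
      (∀ γ₂ : Γ₂, ∀ γ₁ : Γ₁, ρ (γ₁, 1) (c γ₂) = c γ₂) →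
      (∃ m : V, ∀ γ₂ : Γ₂, c γ₂ = ρ (1, γ₂) m - m) →
      ∃ m : V, (∀ γ₁ : Γ₁, ρ (γ₁, 1) m = m) ∧ ∀ γ₂ : Γ₂, c γ₂ = ρ (1, γ₂) m - m) ∧
    -- surjectivity of H¹(Γ₂, V^{Γ₁}) → H¹(Γ₂, V)^{Γ₁}
    (∀ c : Γ₂ → V,
      (∀ γ γ' : Γ₂, c (γ * γ') = c γ + ρ (1, γ) (c γ')) →
      (∀ γ₁ : Γ₁, ∃ m : V, ∀ γ₂ : Γ₂, ρ (γ₁, 1) (c γ₂) - c γ₂ = ρ (1, γ₂) m - m) →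
      ∃ c' : Γ₂ → V,
        (∀ γ γ' : Γ₂, c' (γ * γ') = c' γ + ρ (1, γ) (c' γ')) ∧
        (∀ γ₂ : Γ₂, ∀ γ₁ : Γ₁, ρ (γ₁, 1) (c' γ₂) = c' γ₂) ∧
        ∃ m : V, ∀ γ₂ : Γ₂, c γ₂ = c' γ₂ + (ρ (1, γ₂) m - m)) := by
  classical
  -- commutation of the two actions
  have hcomm12 : ∀ (g : Γ₁) (γ : Γ₂) (v : V),
      ρ (g, 1) (ρ (1, γ) v) = ρ (1, γ) (ρ (g, 1) v) := by
    intro g γ v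
    have h1 : ((g, 1) : Γ₁ × Γ₂) * (1, γ) = (g, γ) := by simp
    have h2 : ((1, 1) : Γ₁ × Γ₂) * (g, γ) = (g, γ) := by simp
    have h3 : ((1, γ) : Γ₁ × Γ₂) * (g, 1) = (g, γ) := by simp
    have e1 := congrArg (fun f : V →ₗ[k] V => f v) (map_mul ρ (g,1) (1,γ))
    have e3 := congrArg (fun f : V →ₗ[k] V => f v) (map_mul ρ (1,γ) (g,1))
    simp only [Module.End.mul_apply] at e1 e3
    rw [h1] at e1
    rw [h3] at e3
    rw [← e1, ← e3]
  -- the fixed subspace W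
  let W : Submodule k V :=
    { carrier := {v | ∀ g : Γ₁, ρ (g, 1) v = v}
      add_mem' := fun ha hb g => by rw [map_add, ha g, hb g]
      zero_mem' := fun g => map_zero _
      smul_mem' := fun c v hv g => by rw [map_smul, hv g] }
  -- the "augmentation" subspace W'
  let W' : Submodule k V :=
    Submodule.span k {v : V | ∃ (g : Γ₁) (w : V), v = ρ (g, 1) w - w}
  have hWstab : ∀ g : Γ₁, ∀ w ∈ W, ρ (g, 1) w ∈ W := by
    intro g w hw
    rw [hw g]; exact hw
  have hW'stab : ∀ g : Γ₁, ∀ w ∈ W', ρ (g, 1) w ∈ W' := by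
    intro g w hw
    induction hw using Submodule.span_induction with
    | mem v hv =>
        obtain ⟨h, u, rfl⟩ := hv
        have : ρ (g, 1) (ρ (h, 1) u - u)
            = (ρ (g * h, 1) u - u) - (ρ (g, 1) u - u) := by
          have := congrArg (fun f : V →ₗ[k] V => f u) (map_mul ρ (g,1) (h,1))
          simp only [Module.End.mul_apply] at this
          have hgh : ((g, 1) : Γ₁ × Γ₂) * (h, 1) = (g * h, 1) := by simp
          rw [hgh] at this
          rw [map_sub, ← this]
          abel
        rw [this]
        exact Submodule.sub_mem _ (Submodule.subset_span ⟨g*h, u, rfl⟩)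
          (Submodule.subset_span ⟨g, u, rfl⟩)
    | zero => rw [map_zero]; exact W'.zero_mem
    | add v₁ v₂ _ _ h₁ h₂ => rw [map_add]; exact W'.add_mem h₁ h₂
    | smul c v _ h => rw [map_smul]; exact W'.smul_mem _ h
  have hW'Γ₂ : ∀ γ : Γ₂, ∀ w ∈ W', ρ (1, γ) w ∈ W' := by
    intro γ w hw
    induction hw using Submodule.span_induction with
    | mem v hv =>
        obtain ⟨h, u, rfl⟩ := hv
        have : ρ (1, γ) (ρ (h, 1) u - u) = ρ (h, 1) (ρ (1, γ) u) - ρ (1, γ) u := by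
          rw [map_sub, hcomm12]
        rw [this]
        exact Submodule.subset_span ⟨h, ρ (1, γ) u, rfl⟩
    | zero => rw [map_zero]; exact W'.zero_mem
    | add v₁ v₂ _ _ h₁ h₂ => rw [map_add]; exact W'.add_mem h₁ h₂
    | smul c v _ h => rw [map_smul]; exact W'.smul_mem _ h
  have hWΓ₂ : ∀ γ : Γ₂, ∀ w ∈ W, ρ (1, γ) w ∈ W := by
    intro γ w hw g
    rw [hcomm12, hw g]
  -- W and W' are complementary
  have hcompl : IsCompl W W' := by
    constructor
    · -- disjointness
      obtain ⟨D, hD, hcD⟩ := hss W hWstab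
      have hW'D : W' ≤ D := by
        refine Submodule.span_le.mpr ?_
        rintro v ⟨g, u, rfl⟩
        have : u ∈ W ⊔ D := by rw [hcD.sup_eq_top]; trivial
        obtain ⟨f, hf, d, hd, rfl⟩ := Submodule.mem_sup.mp this
        have : ρ (g, 1) (f + d) - (f + d) = ρ (g, 1) d - d := by
          rw [map_add, hf g]; abel
        rw [this]
        exact D.sub_mem (hD g d hd) hd
      exact hcD.disjoint.mono_right hW'D
    · -- codisjointness
      obtain ⟨C, hC, hcC⟩ := hss W' hW'stab
      have hCW : C ≤ W := by
        intro x hx g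
        have h1 : ρ (g, 1) x - x ∈ W' := Submodule.subset_span ⟨g, x, rfl⟩
        have h2 : ρ (g, 1) x - x ∈ C := C.sub_mem (hC g x hx) hx
        have : ρ (g, 1) x - x ∈ W' ⊓ C := ⟨h1, h2⟩
        rw [hcC.inf_eq_bot, Submodule.mem_bot] at this
        exact sub_eq_zero.mp this
      rw [codisjoint_iff, eq_top_iff]
      intro x _
      have : x ∈ W' ⊔ C := by rw [hcC.sup_eq_top]; trivial
      obtain ⟨y, hy, z, hz, rfl⟩ := Submodule.mem_sup.mp this
      exact Submodule.add_mem _ (Submodule.mem_sup_right hy)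
        (Submodule.mem_sup_left (hCW hz))
  -- the projection p onto W' along W
  let p : V →ₗ[k] V := W'.subtype ∘ₗ Submodule.projectionOnto W' W hcompl.symm
  have hpW' : ∀ v, p v ∈ W' := fun v =>
    (Submodule.projectionOnto W' W hcompl.symm v).2
  have hpid : ∀ v ∈ W', p v = v := by
    intro v hv
    have := Submodule.projectionOnto_apply_left hcompl.symm ⟨v, hv⟩
    exact congrArg (Submodule.subtype W') this
  have hpW0 : ∀ v ∈ W, p v = 0 := by
    intro v hv
    have := Submodule.projectionOnto_apply_of_mem_right hcompl.symm hv
    simp [p, this]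
  have hq : ∀ v, v - p v ∈ W := by
    intro v
    have : v ∈ W ⊔ W' := by rw [hcompl.sup_eq_top]; trivial
    obtain ⟨w, hw, w', hw', rfl⟩ := Submodule.mem_sup.mp this
    have : p (w + w') = w' := by
      rw [map_add, hpW0 w hw, hpid w' hw', zero_add]
    rw [this]
    simpa using hw
  have hpcomm : ∀ (f : V →ₗ[k] V), (∀ w ∈ W, f w ∈ W) → (∀ w ∈ W', f w ∈ W') →
      ∀ v, p (f v) = f (p v) := by
    intro f hfW hfW' v
    have hv : f v = f (v - p v) + f (p v) := by rw [← map_add]; congr 1; abel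
    rw [hv, map_add, hpW0 _ (hfW _ (hq v)), hpid _ (hfW' _ (hpW' v)), zero_add]
  constructor
  · -- injectivity
    intro c hcoc hfix ⟨m₀, hm₀⟩
    refine ⟨m₀ - p m₀, fun g => (hq m₀) g, fun γ₂ => ?_⟩
    have h1 : ρ (1, γ₂) (p m₀) = p (ρ (1, γ₂) m₀) :=
      (hpcomm (ρ (1, γ₂)) (hWΓ₂ γ₂) (hW'Γ₂ γ₂) m₀).symm
    have h3 : ρ (1, γ₂) m₀ = c γ₂ + m₀ := by rw [hm₀ γ₂]; abel
    have h2 : p (c γ₂) = 0 := hpW0 _ (hfix γ₂)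
    rw [map_sub, h1, h3, map_add, h2, zero_add]
    abel
  · -- surjectivity
    intro c hcoc hinv
    choose m₁ hm₁ using hinv
    -- apply the key lemma to σ g = ρ (g, 1)
    have hp_mem : p ∈ Submodule.span k
        {f : V →ₗ[k] V | ∃ g : Γ₁, f = (ρ.comp (MonoidHom.inl Γ₁ Γ₂)) g ∘ₗ p - p} := by
      apply key_lemma (σ := ρ.comp (MonoidHom.inl Γ₁ Γ₂)) (W' := W')
      · intro Wa hWa
        exact hss Wa hWa
      · intro g w hw
        exact hW'stab g w hw
      · intro v hv1 hv2
        have hvW : v ∈ W := fun g => hv2 g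
        have : v ∈ W ⊓ W' := ⟨hvW, hv1⟩
        rw [hcompl.inf_eq_bot, Submodule.mem_bot] at this
        exact this
      · exact hpW'
    -- the coboundary submodule
    let S : Submodule k (V →ₗ[k] V) :=
      { carrier := {f | ∃ m : V, ∀ γ₂ : Γ₂, f (c γ₂) = ρ (1, γ₂) m - m}
        add_mem' := by
          rintro f₁ f₂ ⟨m₁', h₁⟩ ⟨m₂', h₂⟩
          exact ⟨m₁' + m₂', fun γ₂ => by
            rw [LinearMap.add_apply, h₁ γ₂, h₂ γ₂, map_add]; abel⟩
        zero_mem' := ⟨0, fun γ₂ => by simp⟩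
        smul_mem' := by
          rintro a f ⟨m, h⟩
          exact ⟨a • m, fun γ₂ => by
            rw [LinearMap.smul_apply, h γ₂, map_smul, smul_sub]⟩ }
    have hpS : p ∈ S := by
      refine Submodule.span_le.mpr ?_ hp_mem
      rintro f ⟨g, rfl⟩
      refine ⟨p (m₁ g), fun γ₂ => ?_⟩
      have e1 : ((ρ.comp (MonoidHom.inl Γ₁ Γ₂)) g ∘ₗ p - p) (c γ₂)
          = ρ (g, 1) (p (c γ₂)) - p (c γ₂) := rfl
      have e2 : ρ (g, 1) (p (c γ₂)) = p (ρ (g, 1) (c γ₂)) :=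
        (hpcomm (ρ (g, 1)) (hWstab g) (hW'stab g) (c γ₂)).symm
      rw [e1, e2, ← map_sub, hm₁ g γ₂, map_sub,
        hpcomm (ρ (1, γ₂)) (hWΓ₂ γ₂) (hW'Γ₂ γ₂) (m₁ g)]
    obtain ⟨m, hm⟩ := hpS
    refine ⟨fun γ₂ => c γ₂ - p (c γ₂), ?_, ?_, ⟨m, fun γ₂ => ?_⟩⟩
    · intro γ γ'
      show c (γ * γ') - p (c (γ * γ')) = (c γ - p (c γ)) + ρ (1, γ) (c γ' - p (c γ'))
      have h1 : p (c (γ * γ')) = p (c γ) + ρ (1, γ) (p (c γ')) := by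
        rw [hcoc γ γ', map_add, hpcomm (ρ (1, γ)) (hWΓ₂ γ) (hW'Γ₂ γ)]
      rw [h1, hcoc γ γ', map_sub]
      abel
    · intro γ₂ g
      exact (hq (c γ₂)) g
    · show c γ₂ = (c γ₂ - p (c γ₂)) + (ρ (1, γ₂) m - m)
      rw [← hm γ₂]
      abel
end
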